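/- Upper bound relating Hardy probability to the parameter r: For all r,s,t ∈ (0,1) with 1-s-t+rst ≥ 0 and t ≤ (1-s)/(1-rs), the Hardy function satisfies Ω(r,s,t) = r²(1-r)st(1-s-t+rst)/((1-rs)(1-rt)) ≤ r²(1-r) ≤ 4/27. -/
import Mathlib


/-- The tripartite Hardy probability function. -/
noncomputable def hardyΩ (r s t : ℝ) : ℝ :=
  r ^ 2 * (1 - r) * s * t * (1 - s - t + r * s * t) / ((1 - r * s) * (1 - r * t))

/-- Upper bound relating the Hardy probability to the parameter r:
Ω(r,s,t) ≤ r²(1-r) ≤ 4/27. -/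
theorem hardyΩ_le_bound (r s t : ℝ)
    (hr : r ∈ Set.Ioo (0:ℝ) 1) (hs : s ∈ Set.Ioo (0:ℝ) 1) (ht : t ∈ Set.Ioo (0:ℝ) 1)
    (hh : 0 ≤ 1 - s - t + r * s * t) (htle : t ≤ (1 - s) / (1 - r * s)) :
    hardyΩ r s t ≤ r ^ 2 * (1 - r) ∧ r ^ 2 * (1 - r) ≤ 4 / 27 := by
  obtain ⟨hr0, hr1⟩ := hr
  obtain ⟨hs0, hs1⟩ := hs
  obtain ⟨ht0, ht1⟩ := ht
  have hrs : 0 < 1 - r * s := by nlinarith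
  have hrt : 0 < 1 - r * t := by nlinarith
  have hden : 0 < (1 - r * s) * (1 - r * t) := mul_pos hrs hrt
  constructor
  · rw [hardyΩ, div_le_iff₀ hden]
    have key : s * t * (1 - s - t + r * s * t) ≤ (1 - r * s) * (1 - r * t) := by
      have h1 : 1 - s - t + r * s * t ≤ (1 - s) * (1 - t) := by nlinarith [mul_nonneg (mul_nonneg hs0.le ht0.le) (show (0:ℝ) ≤ 1 - r by linarith)]
      have h2 : s * t * (1 - s - t + r * s * t) ≤ s * t * ((1 - s) * (1 - t)) := by
        nlinarith [mul_pos hs0 ht0]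
      have h3 : s * t * ((1 - s) * (1 - t)) ≤ (1 - s) * (1 - t) := by
        have hst : s * t ≤ 1 := by nlinarith
        nlinarith [mul_nonneg (show (0:ℝ) ≤ 1 - s * t by linarith)
          (mul_nonneg (show (0:ℝ) ≤ 1 - s by linarith) (show (0:ℝ) ≤ 1 - t by linarith))]
      have h4 : (1 - s) * (1 - t) ≤ (1 - r * s) * (1 - r * t) := by
        have hx : (0:ℝ) ≤ s + t - s * t * (1 + r) := by
          nlinarith [mul_nonneg hs0.le (show (0:ℝ) ≤ 1 - t by linarith), mul_nonneg ht0.le (show (0:ℝ) ≤ 1 - s by linarith), mul_nonneg (mul_nonneg hs0.le ht0.le) (show (0:ℝ) ≤ 1 - r by linarith)]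
        nlinarith [mul_nonneg (show (0:ℝ) ≤ 1 - r by linarith) hx]
      linarith
    have h1r : (0:ℝ) ≤ 1 - r := by linarith
    have hpos : 0 ≤ r ^ 2 * (1 - r) := by positivity
    nlinarith [mul_le_mul_of_nonneg_left key hpos]
  · nlinarith [sq_nonneg (r - 2/3), sq_nonneg (3*r - 2), sq_nonneg r]
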